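/- Let t ≥ 1 and y = (-t + √t)/t. If B is the incidence matrix of an SBIBD(4t-1, 2t-1, t-1) and S = B + y(J - B), then S·Sᵀ = ω·I with ω = (2t-1) + 2t·y², and |det S| = ω^((4t-1)/2). -/

import Mathlib

open Matrix

/-- The all-ones matrix J. -/
def allOnes (n : ℕ) : Matrix (Fin n) (Fin n) ℝ := Matrix.of fun _ _ => 1

theorem stmt_7 (t : ℕ) (ht : 1 ≤ t) (y : ℝ)
    (hy : y = (-(t:ℝ) + Real.sqrt t) / t)
    (B : Matrix (Fin (4*t-1)) (Fin (4*t-1)) ℝ)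
    (h01 : ∀ i j, B i j = 0 ∨ B i j = 1)
    (hBBt : B * Bᵀ = (t:ℝ) • (1 : Matrix (Fin (4*t-1)) (Fin (4*t-1)) ℝ) +
      ((t:ℝ) - 1) • allOnes (4*t-1))
    (hrow : ∀ i, ∑ j, B i j = 2 * (t:ℝ) - 1)
    (S : Matrix (Fin (4*t-1)) (Fin (4*t-1)) ℝ)
    (hS : S = B + y • (allOnes (4*t-1) - B)) :
    S * Sᵀ = ((2 * (t:ℝ) - 1) + 2 * (t:ℝ) * y ^ 2) • (1 : Matrix (Fin (4*t-1)) (Fin (4*t-1)) ℝ) ∧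
      |S.det| = ((2 * (t:ℝ) - 1) + 2 * (t:ℝ) * y ^ 2) ^ ((4 * (t:ℝ) - 1) / 2) := by
  have ht0 : (0:ℝ) < t := by exact_mod_cast ht
  have ht1 : (1:ℝ) ≤ t := by exact_mod_cast ht
  have hst : Real.sqrt t ^ 2 = t := Real.sq_sqrt ht0.le
  have h1 : (t:ℝ)*y + t = Real.sqrt t := by rw [hy]; field_simp; ring
  have h2 : ((t:ℝ)*y + t)^2 = t := by rw [h1]; exact hst
  have h3 : (t:ℝ) * ((t:ℝ)*y^2 + 2*t*y + t) = (t:ℝ) * 1 := by linear_combination h2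
  have hkey : (t:ℝ)*y^2 + 2*t*y + t = 1 := mul_left_cancel₀ ht0.ne' h3
  have hn4 : ((4*t-1 : ℕ):ℝ) = 4*(t:ℝ) - 1 := by
    push_cast [Nat.cast_sub (by omega : 1 ≤ 4*t)]; ring
  have hJJ : allOnes (4*t-1) * allOnes (4*t-1) = (4*(t:ℝ)-1) • allOnes (4*t-1) := by
    ext i j
    simp [allOnes, Matrix.mul_apply, Matrix.smul_apply, Finset.sum_const, hn4]
  have hBJ : B * allOnes (4*t-1) = (2*(t:ℝ)-1) • allOnes (4*t-1) := by
    ext i j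
    simp [allOnes, Matrix.mul_apply, Matrix.smul_apply]
    exact hrow i
  have hJB : allOnes (4*t-1) * Bᵀ = (2*(t:ℝ)-1) • allOnes (4*t-1) := by
    ext i j
    simp [allOnes, Matrix.mul_apply, Matrix.transpose_apply, Matrix.smul_apply]
    exact hrow j
  have hJt : (allOnes (4*t-1))ᵀ = allOnes (4*t-1) := by ext i j; simp [allOnes]
  have hS' : S = (1-y) • B + y • allOnes (4*t-1) := by
    rw [hS, smul_sub, sub_smul, one_smul]; abel
  have hmain : S * Sᵀ = ((2 * (t:ℝ) - 1) + 2 * (t:ℝ) * y ^ 2) •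
      (1 : Matrix (Fin (4*t-1)) (Fin (4*t-1)) ℝ) := by
    rw [hS', transpose_add, transpose_smul, transpose_smul, hJt]
    rw [add_mul, mul_add, mul_add]
    simp only [Matrix.smul_mul, Matrix.mul_smul, hBBt, hBJ, hJB, hJJ, smul_smul, smul_add]
    ext i j
    simp only [Matrix.add_apply, Matrix.smul_apply, Matrix.one_apply, allOnes, Matrix.of_apply,
      smul_eq_mul]
    split_ifs with h
    · ring_nf
    · ring_nf; nlinarith [hkey]
  refine ⟨hmain, ?_⟩
  have hω : (0:ℝ) < (2 * (t:ℝ) - 1) + 2 * (t:ℝ) * y ^ 2 := by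
    nlinarith [mul_nonneg ht0.le (sq_nonneg y), ht1]
  have hdet2 : S.det ^ 2 = ((2 * (t:ℝ) - 1) + 2 * (t:ℝ) * y ^ 2) ^ (4*t-1) := by
    have h := congrArg Matrix.det hmain
    rw [det_mul, det_transpose, det_smul, det_one, Fintype.card_fin] at h
    rw [sq]; simpa using h
  have habs : |S.det| = Real.sqrt (((2 * (t:ℝ) - 1) + 2 * (t:ℝ) * y ^ 2) ^ (4*t-1)) := by
    rw [← hdet2, Real.sqrt_sq_eq_abs]
  rw [habs, show (4 * (t:ℝ) - 1) / 2 = ((4*t-1:ℕ):ℝ) * (1/2) by rw [hn4]; ring,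
    Real.rpow_mul hω.le, Real.rpow_natCast, ← Real.sqrt_eq_rpow]
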